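/- Let π : Lit_A → ℕ[X,X̄] be a model-compatible interpretation and let φ be a first-order sentence over 𝒱. Then φ is Mod_π-satisfiable (i.e., there exists a structure 𝔄 with universe A compatible with π such that 𝔄 ⊨ φ) if and only if π⟦φ⟧ ≠ 0. -/

import Mathlib

/-- A finite relational vocabulary: a type of relation symbols with arities. -/
structure Vocab : Type 1 where
  Rel : Type
  arity : Rel → ℕ

/-- First-order formulas over a relational vocabulary `𝒱` (with equality),
with variables from `Vars`.  Negated atoms are included as primitive literals. -/
inductive Formula (𝒱 : Vocab) (Vars : Type) : Type where
  | rel    : (R : 𝒱.Rel) → (Fin (𝒱.arity R) → Vars) → Formula 𝒱 Vars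
  | nrel   : (R : 𝒱.Rel) → (Fin (𝒱.arity R) → Vars) → Formula 𝒱 Vars
  | equal  : Vars → Vars → Formula 𝒱 Vars
  | nequal : Vars → Vars → Formula 𝒱 Vars
  | and    : Formula 𝒱 Vars → Formula 𝒱 Vars → Formula 𝒱 Vars
  | or     : Formula 𝒱 Vars → Formula 𝒱 Vars → Formula 𝒱 Vars
  | all    : Vars → Formula 𝒱 Vars → Formula 𝒱 Vars
  | ex     : Vars → Formula 𝒱 Vars → Formula 𝒱 Vars
  | not    : Formula 𝒱 Vars → Formula 𝒱 Vars

/-- A ground literal over vocabulary `𝒱` and universe `A`: a positive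
(`pos = true`) or negated (`pos = false`) ground atom `R(ā)`. -/
structure Lit (𝒱 : Vocab) (A : Type) where
  pos : Bool
  R : 𝒱.Rel
  args : Fin (𝒱.arity R) → A

/-- Negation of a literal (the negation of a literal is again a literal). -/
def Lit.neg {𝒱 : Vocab} {A : Type} (L : Lit 𝒱 A) : Lit 𝒱 A := ⟨!L.pos, L.R, L.args⟩

namespace Formula

variable {𝒱 : Vocab} {Vars : Type}

/-- Size of a formula (used for termination of the semiring semantics). -/
def size : Formula 𝒱 Vars → ℕ
  | rel _ _ => 1
  | nrel _ _ => 1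
  | equal _ _ => 1
  | nequal _ _ => 1
  | and φ ψ => φ.size + ψ.size + 1
  | or φ ψ => φ.size + ψ.size + 1
  | all _ φ => φ.size + 1
  | ex _ φ => φ.size + 1
  | not φ => φ.size + 1

mutual
/-- Negation normal form of a formula. -/
def nnf : Formula 𝒱 Vars → Formula 𝒱 Vars
  | rel R v => rel R v
  | nrel R v => nrel R v
  | equal x y => equal x y
  | nequal x y => nequal x y
  | and φ ψ => and φ.nnf ψ.nnf
  | or φ ψ => or φ.nnf ψ.nnf
  | all x φ => all x φ.nnf
  | ex x φ => ex x φ.nnf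
  | not φ => nnfNeg φ

/-- Negation normal form of the negation of a formula: `nnfNeg φ = nnf (¬φ)`. -/
def nnfNeg : Formula 𝒱 Vars → Formula 𝒱 Vars
  | rel R v => nrel R v
  | nrel R v => rel R v
  | equal x y => nequal x y
  | nequal x y => equal x y
  | and φ ψ => or (nnfNeg φ) (nnfNeg ψ)
  | or φ ψ => and (nnfNeg φ) (nnfNeg ψ)
  | all x φ => ex x (nnfNeg φ)
  | ex x φ => all x (nnfNeg φ)
  | not φ => nnf φ
end

theorem size_nnf_le (φ : Formula 𝒱 Vars) : φ.nnf.size ≤ φ.size ∧ (nnfNeg φ).size ≤ φ.size := by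
  induction φ <;> simp_all [nnf, nnfNeg, size] <;> omega

/-- Free variables of a formula. -/
def FV [DecidableEq Vars] : Formula 𝒱 Vars → Finset Vars
  | rel _ v => Finset.image v Finset.univ
  | nrel _ v => Finset.image v Finset.univ
  | equal x y => {x, y}
  | nequal x y => {x, y}
  | and φ ψ => φ.FV ∪ ψ.FV
  | or φ ψ => φ.FV ∪ ψ.FV
  | all x φ => φ.FV.erase x
  | ex x φ => φ.FV.erase x
  | not φ => φ.FV

end Formula

section Semantics

variable {𝒱 : Vocab} {Vars A K : Type} [DecidableEq Vars] [Fintype A] [DecidableEq A]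
  [CommSemiring K]

/-- The extension of a `K`-interpretation `π : Lit 𝒱 A → K` to first-order formulas,
relative to a valuation `ν : Vars → A`:  `eval π φ ν = π⟦φ⟧ν`. -/
def eval (π : Lit 𝒱 A → K) : Formula 𝒱 Vars → (Vars → A) → K
  | .rel R v, ν => π ⟨true, R, fun i => ν (v i)⟩
  | .nrel R v, ν => π ⟨false, R, fun i => ν (v i)⟩
  | .equal x y, ν => if ν x = ν y then 1 else 0
  | .nequal x y, ν => if ν x ≠ ν y then 1 else 0
  | .and φ ψ, ν => eval π φ ν * eval π ψ ν
  | .or φ ψ, ν => eval π φ ν + eval π ψ ν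
  | .all x φ, ν => ∏ a : A, eval π φ (Function.update ν x a)
  | .ex x φ, ν => ∑ a : A, eval π φ (Function.update ν x a)
  | .not φ, ν => eval π (Formula.nnfNeg φ) ν
termination_by φ _ => φ.size
decreasing_by
  all_goals simp [Formula.size]
  all_goals first
    | omega
    | exact Nat.lt_succ_of_le (Formula.size_nnf_le _).2
    | exact (Formula.size_nnf_le _).2

end Semantics

/-- A `𝒱`-structure with universe `A`: an interpretation of each relation symbol. -/
def Struc (𝒱 : Vocab) (A : Type) := (R : 𝒱.Rel) → (Fin (𝒱.arity R) → A) → Prop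

/-- Standard (Tarski) satisfaction of a literal in a structure. -/
def Struc.SatLit {𝒱 : Vocab} {A : Type} (𝔄 : Struc 𝒱 A) (L : Lit 𝒱 A) : Prop :=
  if L.pos then 𝔄 L.R L.args else ¬ 𝔄 L.R L.args

section Sat

variable {𝒱 : Vocab} {Vars A : Type} [DecidableEq Vars]

/-- Standard (Tarski) satisfaction relation `𝔄 ⊨ φ[ν]`. -/
def Sat (𝔄 : Struc 𝒱 A) : Formula 𝒱 Vars → (Vars → A) → Prop
  | .rel R v, ν => 𝔄 R (fun i => ν (v i))
  | .nrel R v, ν => ¬ 𝔄 R (fun i => ν (v i))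
  | .equal x y, ν => ν x = ν y
  | .nequal x y, ν => ν x ≠ ν y
  | .and φ ψ, ν => Sat 𝔄 φ ν ∧ Sat 𝔄 ψ ν
  | .or φ ψ, ν => Sat 𝔄 φ ν ∨ Sat 𝔄 ψ ν
  | .all x φ, ν => ∀ a : A, Sat 𝔄 φ (Function.update ν x a)
  | .ex x φ, ν => ∃ a : A, Sat 𝔄 φ (Function.update ν x a)
  | .not φ, ν => ¬ Sat 𝔄 φ ν

end Sat

section ModelDefining

variable {𝒱 : Vocab} {A K : Type} [CommSemiring K]

/-- A `K`-interpretation is model-defining if for each fact exactly one of the values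
assigned to it and to its negation is `0`. -/
def ModelDefining (π : Lit 𝒱 A → K) : Prop :=
  ∀ L : Lit 𝒱 A, (π L = 0 ∧ π L.neg ≠ 0) ∨ (π L ≠ 0 ∧ π L.neg = 0)

/-- The structure `𝔄_π` defined by a model-defining interpretation `π`:
it satisfies a literal `L` iff `π L ≠ 0`. -/
def StrucOf (π : Lit 𝒱 A → K) : Struc 𝒱 A := fun R a => π ⟨true, R, a⟩ ≠ 0

end ModelDefining

/-- A commutative semiring is positive if it is `+`-positive and has no divisors of zero. -/
def IsPositive (K : Type) [CommSemiring K] : Prop :=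
  (∀ a b : K, a + b = 0 → a = 0 ∧ b = 0) ∧ ∀ a b : K, a * b = 0 → a = 0 ∨ b = 0


open MvPolynomial

/-- Generating relation for the dual-indeterminate congruence: `p · p̄ = 0` for `p ∈ X`
(we realize the set of tokens `X ∪ X̄` as the sum type `X ⊕ X`, with `Sum.inl p = p`
and `Sum.inr p = p̄`). -/
def pairRel (X : Type) : MvPolynomial (X ⊕ X) ℕ → MvPolynomial (X ⊕ X) ℕ → Prop :=
  fun a b => b = 0 ∧ ∃ p : X, a = MvPolynomial.X (Sum.inl p) * MvPolynomial.X (Sum.inr p)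

/-- The semiring congruence on `ℕ[X ∪ X̄]` generated by `p · p̄ = 0` for all `p ∈ X`. -/
noncomputable def dualCon (X : Type) : RingCon (MvPolynomial (X ⊕ X) ℕ) := ringConGen (pairRel X)

/-- `ℕ[X,X̄]`: the commutative semiring of dual-indeterminate polynomials, i.e. the
quotient of the polynomial semiring `ℕ[X ∪ X̄]` by the congruence `p · p̄ = 0`. -/
abbrev DualPoly (X : Type) := (dualCon X).Quotient

/-- The image in `ℕ[X,X̄]` of a provenance token `x ∈ X ∪ X̄`. -/
noncomputable def tok {X : Type} (x : X ⊕ X) : DualPoly X :=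
  ((MvPolynomial.X x : MvPolynomial (X ⊕ X) ℕ) : DualPoly X)

open Classical in
/-- Deleting from a polynomial all monomials that contain a pair of complementary tokens. -/
noncomputable def clean {X : Type} (q : MvPolynomial (X ⊕ X) ℕ) : MvPolynomial (X ⊕ X) ℕ :=
  ∑ m ∈ q.support.filter
      (fun m => ¬ ∃ p : X, m (Sum.inl p) ≠ 0 ∧ m (Sum.inr p) ≠ 0),
    MvPolynomial.monomial m (q.coeff m)

/-- A representative polynomial of an element of `ℕ[X,X̄]`. -/
noncomputable def qrep {X : Type} (q : DualPoly X) : MvPolynomial (X ⊕ X) ℕ :=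
  (Quot.exists_rep q).choose

/-- The coefficient of the monomial `m` in a dual-indeterminate polynomial:
the coefficient of `m` in the canonical (clean) representative. -/
noncomputable def coeffQ {X : Type} (q : DualPoly X) (m : (X ⊕ X) →₀ ℕ) : ℕ :=
  (clean (qrep q)).coeff m

/-- The sum of the monomial coefficients of a dual-indeterminate polynomial. -/
noncomputable def sumCoeff {X : Type} (q : DualPoly X) : ℕ :=
  ∑ m ∈ (clean (qrep q)).support, (clean (qrep q)).coeff m


section DualInterp

variable {𝒱 : Vocab} {A X : Type}

/-- A provenance-tracking interpretation: positive facts are annotated with positive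
tokens (or `0`, `1`), negative facts with negative tokens (or `0`, `1`), with the
convention that the complementary token `p̄` may only annotate the negation of the
fact annotated by `p` (and vice versa). -/
def ProvTracking (π : Lit 𝒱 A → DualPoly X) : Prop :=
  (∀ L : Lit 𝒱 A, L.pos = true → π L = 0 ∨ π L = 1 ∨ ∃ p : X, π L = tok (Sum.inl p)) ∧
  (∀ L : Lit 𝒱 A, L.pos = false → π L = 0 ∨ π L = 1 ∨ ∃ p : X, π L = tok (Sum.inr p)) ∧
  (∀ L L' : Lit 𝒱 A, ∀ p : X,
     π L = tok (Sum.inl p) → π L' = tok (Sum.inr p) → L' = L.neg)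

/-- A model-compatible interpretation: each fact is either tracked by a pair of
complementary tokens `z`, `z̄` (a distinct pair for each tracked fact), or is
annotated by `0` and `1` (untracked false fact) or by `1` and `0` (untracked true
fact). -/
def ModelCompatible (π : Lit 𝒱 A → DualPoly X) : Prop :=
  (∀ L : Lit 𝒱 A, L.pos = true →
      (∃ z : X, π L = tok (Sum.inl z) ∧ π L.neg = tok (Sum.inr z)) ∨
      (π L = 0 ∧ π L.neg = 1) ∨ (π L = 1 ∧ π L.neg = 0)) ∧
  (∀ L L' : Lit 𝒱 A, ∀ z : X, π L = tok (Sum.inl z) → π L' = tok (Sum.inl z) → L = L')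

/-- A structure `𝔄` (with the same universe `A`) is compatible with `π` if `𝔄 ⊨ L`
for every literal `L` with `π L = 1`. -/
def Compatible (π : Lit 𝒱 A → DualPoly X) (𝔄 : Struc 𝒱 A) : Prop :=
  ∀ L : Lit 𝒱 A, π L = 1 → 𝔄.SatLit L

open Classical in
/-- The specialization `π↓𝔄` of an interpretation `π` with respect to a structure `𝔄`:
`π↓𝔄(L) = π(L)` if `𝔄 ⊨ L` and `π↓𝔄(L) = 0` otherwise. -/
noncomputable def specialize {K : Type} [CommSemiring K] (π : Lit 𝒱 A → K)
    (𝔄 : Struc 𝒱 A) : Lit 𝒱 A → K :=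
  fun L => if 𝔄.SatLit L then π L else 0

end DualInterp

section Aux

open Formula

variable {𝒱 : Vocab} {Vars A : Type} [DecidableEq Vars]

theorem sat_nnf_both (𝔄 : Struc 𝒱 A) (φ : Formula 𝒱 Vars) :
    ∀ ν, (Sat 𝔄 φ.nnf ν ↔ Sat 𝔄 φ ν) ∧ (Sat 𝔄 (Formula.nnfNeg φ) ν ↔ ¬ Sat 𝔄 φ ν) := by
  induction φ with
  | rel R v => intro ν; simp [Formula.nnf, Formula.nnfNeg, Sat]
  | nrel R v => intro ν; simp [Formula.nnf, Formula.nnfNeg, Sat, not_not]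
  | equal x y => intro ν; simp [Formula.nnf, Formula.nnfNeg, Sat, not_not]
  | nequal x y => intro ν; simp [Formula.nnf, Formula.nnfNeg, Sat, not_not]
  | and φ ψ ihφ ihψ =>
      intro ν
      simp only [Formula.nnf, Formula.nnfNeg, Sat, (ihφ ν).1, (ihφ ν).2, (ihψ ν).1, (ihψ ν).2]
      tauto
  | or φ ψ ihφ ihψ =>
      intro ν
      simp only [Formula.nnf, Formula.nnfNeg, Sat, (ihφ ν).1, (ihφ ν).2, (ihψ ν).1, (ihψ ν).2]
      tauto
  | all x φ ih =>
      intro ν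
      constructor
      · simp only [Formula.nnf, Sat]
        exact forall_congr' fun a => (ih _).1
      · simp only [Formula.nnfNeg, Sat, not_forall]
        exact exists_congr fun a => (ih _).2
  | ex x φ ih =>
      intro ν
      constructor
      · simp only [Formula.nnf, Sat]
        exact exists_congr fun a => (ih _).1
      · simp only [Formula.nnfNeg, Sat, not_exists]
        exact forall_congr' fun a => (ih _).2
  | not φ ih =>
      intro ν
      refine ⟨(ih ν).2, ?_⟩
      simp only [Formula.nnfNeg, Sat, not_not]
      exact (ih ν).1

theorem sat_nnfNeg (𝔄 : Struc 𝒱 A) (φ : Formula 𝒱 Vars) (ν : Vars → A) :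
    Sat 𝔄 (Formula.nnfNeg φ) ν ↔ ¬ Sat 𝔄 φ ν := (sat_nnf_both 𝔄 φ ν).2

end Aux
section Aux2

open Formula

variable {𝒱 : Vocab} {Vars A K K' : Type} [DecidableEq Vars] [Fintype A] [DecidableEq A]
  [CommSemiring K] [CommSemiring K']

theorem eval_ringHom (g : K →+* K') (π : Lit 𝒱 A → K) :
    ∀ (n : ℕ) (φ : Formula 𝒱 Vars), φ.size ≤ n → ∀ ν,
      g (eval π φ ν) = eval (fun L => g (π L)) φ ν := by
  intro n
  induction n with
  | zero => intro φ hφ; cases φ <;> simp [Formula.size] at hφ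
  | succ n ih =>
    intro φ hφ ν
    cases φ with
    | rel R v => simp [_root_.eval]
    | nrel R v => simp [_root_.eval]
    | equal x y => simp [_root_.eval, apply_ite g]
    | nequal x y => simp [_root_.eval, apply_ite g]
    | and φ ψ =>
        simp only [Formula.size] at hφ
        simp only [_root_.eval, map_mul, ih φ (by omega) ν, ih ψ (by omega) ν]
    | or φ ψ =>
        simp only [Formula.size] at hφ
        simp only [_root_.eval, map_add, ih φ (by omega) ν, ih ψ (by omega) ν]
    | all x φ =>
        simp only [Formula.size] at hφ
        simp only [_root_.eval, map_prod]
        exact Finset.prod_congr rfl fun a _ => ih φ (by omega) _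
    | ex x φ =>
        simp only [Formula.size] at hφ
        simp only [_root_.eval, map_sum]
        exact Finset.sum_congr rfl fun a _ => ih φ (by omega) _
    | not φ =>
        simp only [Formula.size] at hφ
        simp only [_root_.eval]
        exact ih (Formula.nnfNeg φ) (le_trans (Formula.size_nnf_le φ).2 (by omega)) ν

theorem sat_iff_eval (τ : Lit 𝒱 A → ℕ) (𝔄 : Struc 𝒱 A)
    (hτ : ∀ L : Lit 𝒱 A, 𝔄.SatLit L ↔ τ L ≠ 0) :
    ∀ (n : ℕ) (φ : Formula 𝒱 Vars), φ.size ≤ n → ∀ ν,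
      (Sat 𝔄 φ ν ↔ eval τ φ ν ≠ 0) := by
  intro n
  induction n with
  | zero => intro φ hφ; cases φ <;> simp [Formula.size] at hφ
  | succ n ih =>
    intro φ hφ ν
    cases φ with
    | rel R v =>
        have := hτ ⟨true, R, fun i => ν (v i)⟩
        simp only [Struc.SatLit, if_pos rfl] at this
        simpa [_root_.eval, Sat] using this
    | nrel R v =>
        have := hτ ⟨false, R, fun i => ν (v i)⟩
        simp only [Struc.SatLit] at this
        simpa [_root_.eval, Sat] using this
    | equal x y => by_cases h : ν x = ν y <;> simp [_root_.eval, Sat, h]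
    | nequal x y => by_cases h : ν x = ν y <;> simp [_root_.eval, Sat, h]
    | and φ ψ =>
        simp only [Formula.size] at hφ
        simp only [_root_.eval, Sat, Nat.mul_ne_zero_iff, ih φ (by omega) ν, ih ψ (by omega) ν]
    | or φ ψ =>
        simp only [Formula.size] at hφ
        have h1 := ih φ (by omega) ν
        have h2 := ih ψ (by omega) ν
        simp only [_root_.eval, Sat, h1, h2]
        omega
    | all x φ =>
        simp only [Formula.size] at hφ
        simp only [_root_.eval, Sat, Finset.prod_ne_zero_iff]
        exact forall_congr' fun a => by
          simpa using ih φ (by omega) (Function.update ν x a)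
    | ex x φ =>
        simp only [Formula.size] at hφ
        have key : ∀ a : A, Sat 𝔄 φ (Function.update ν x a) ↔
            _root_.eval τ φ (Function.update ν x a) ≠ 0 := fun a => ih φ (by omega) _
        simp only [_root_.eval, Sat]
        constructor
        · rintro ⟨a, ha⟩ h0
          exact ((key a).1 ha) (Finset.sum_eq_zero_iff.mp h0 a (Finset.mem_univ a))
        · intro h
          by_contra hc
          push_neg at hc
          exact h (Finset.sum_eq_zero fun a _ => by
            by_contra h0
            exact hc a ((key a).2 h0))
    | not φ =>
        simp only [_root_.eval, Sat]
        rw [← sat_nnfNeg 𝔄 φ ν]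
        exact ih (Formula.nnfNeg φ)
          (le_trans (Formula.size_nnf_le φ).2 (by simp [Formula.size] at hφ; omega)) ν

end Aux2
section Aux3

variable {X : Type}

/-- Token valuation induced by a Boolean assignment. -/
def sig (b : X → Bool) : X ⊕ X → ℕ
  | Sum.inl p => if b p then 1 else 0
  | Sum.inr p => if b p then 0 else 1

theorem dualCon_ker (b : X → Bool) {f g : MvPolynomial (X ⊕ X) ℕ}
    (h : dualCon X f g) :
    MvPolynomial.eval (sig b) f = MvPolynomial.eval (sig b) g := by
  have h' : RingConGen.Rel (pairRel X) f g := h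
  clear h
  induction h' with
  | of x y hxy =>
      obtain ⟨rfl, p, rfl⟩ := hxy
      simp only [map_mul, MvPolynomial.eval_X, map_zero]
      cases hb : b p <;> simp [sig, hb]
  | refl x => rfl
  | symm _ ih => exact ih.symm
  | trans _ _ ih1 ih2 => exact ih1.trans ih2
  | add _ _ ih1 ih2 => simp only [map_add, ih1, ih2]
  | mul _ _ ih1 ih2 => simp only [map_mul, ih1, ih2]

/-- The evaluation homomorphism `ℕ[X,X̄] → ℕ` induced by a Boolean assignment. -/
noncomputable def hb (b : X → Bool) : DualPoly X →+* ℕ where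
  toFun := Quotient.lift (fun f => MvPolynomial.eval (sig b) f)
    (fun _ _ h => dualCon_ker b h)
  map_one' := by
    rw [show (1 : DualPoly X) = ((1 : MvPolynomial (X ⊕ X) ℕ) : DualPoly X) from
      ((dualCon X).coe_one 
        ).symm]
    exact map_one (MvPolynomial.eval (sig b))
  map_zero' := by
    rw [show (0 : DualPoly X) = ((0 : MvPolynomial (X ⊕ X) ℕ) : DualPoly X) from
      ((dualCon X).coe_zero
        ).symm]
    exact map_zero (MvPolynomial.eval (sig b))
  map_mul' := fun x y => Quotient.inductionOn₂ x y fun f g => map_mul (MvPolynomial.eval (sig b)) f g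
  map_add' := fun x y => Quotient.inductionOn₂ x y fun f g => map_add (MvPolynomial.eval (sig b)) f g

theorem hb_coe (b : X → Bool) (f : MvPolynomial (X ⊕ X) ℕ) :
    hb b (f : DualPoly X) = MvPolynomial.eval (sig b) f := rfl

theorem hb_tok (b : X → Bool) (x : X ⊕ X) : hb b (tok x) = sig b x := by
  rw [tok, hb_coe, MvPolynomial.eval_X]

theorem coe_XX_eq_zero (p : X) :
    ((MvPolynomial.X (Sum.inl p) * MvPolynomial.X (Sum.inr p) :
      MvPolynomial (X ⊕ X) ℕ) : DualPoly X) = 0 := by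
  have h : dualCon X (MvPolynomial.X (Sum.inl p) * MvPolynomial.X (Sum.inr p)) 0 :=
    RingConGen.Rel.of _ _ ⟨rfl, p, rfl⟩
  exact Quotient.sound h

theorem coe_monomial_dirty (m : (X ⊕ X) →₀ ℕ) (c : ℕ) (p : X)
    (h1 : m (Sum.inl p) ≠ 0) (h2 : m (Sum.inr p) ≠ 0) :
    ((MvPolynomial.monomial m c : MvPolynomial (X ⊕ X) ℕ) : DualPoly X) = 0 := by
  classical
  set s : (X ⊕ X) →₀ ℕ := Finsupp.single (Sum.inl p) 1 + Finsupp.single (Sum.inr p) 1 with hs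
  have hle : s ≤ m := by
    rw [Finsupp.le_def]
    intro x
    rw [hs]
    rcases x with q | q
    · rw [Finsupp.add_apply, Finsupp.single_apply, Finsupp.single_apply,
        if_neg (by simp : ¬ (Sum.inr p = Sum.inl q))]
      by_cases h : p = q
      · subst h; rw [if_pos rfl]; omega
      · rw [if_neg (by simp [h])]; omega
    · rw [Finsupp.add_apply, Finsupp.single_apply, Finsupp.single_apply,
        if_neg (by simp : ¬ (Sum.inl p = Sum.inr q))]
      by_cases h : p = q
      · subst h; rw [if_pos rfl]; omega
      · rw [if_neg (by simp [h])]; omega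
  have hX : ∀ x : X ⊕ X, (MvPolynomial.X x : MvPolynomial (X ⊕ X) ℕ) =
      MvPolynomial.monomial (Finsupp.single x 1) 1 := fun x => by
    rw [← MvPolynomial.X_pow_eq_monomial, pow_one]
  have hXX : (MvPolynomial.X (Sum.inl p) * MvPolynomial.X (Sum.inr p) :
      MvPolynomial (X ⊕ X) ℕ) = MvPolynomial.monomial s 1 := by
    rw [hX, hX, MvPolynomial.monomial_mul, one_mul]
  have hdec : (MvPolynomial.monomial m c : MvPolynomial (X ⊕ X) ℕ) =
      (MvPolynomial.X (Sum.inl p) * MvPolynomial.X (Sum.inr p)) *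
        MvPolynomial.monomial (m - s) c := by
    rw [hXX, MvPolynomial.monomial_mul, one_mul, add_tsub_cancel_of_le hle]
  calc ((MvPolynomial.monomial m c : MvPolynomial (X ⊕ X) ℕ) : DualPoly X)
      = (dualCon X).mk' (MvPolynomial.monomial m c) := rfl
    _ = (dualCon X).mk' (MvPolynomial.X (Sum.inl p) * MvPolynomial.X (Sum.inr p)) *
          (dualCon X).mk' (MvPolynomial.monomial (m - s) c) := by rw [hdec, map_mul]
    _ = 0 := by
          rw [show (dualCon X).mk' (MvPolynomial.X (Sum.inl p) * MvPolynomial.X (Sum.inr p)) =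
            0 from coe_XX_eq_zero p, zero_mul]

open Classical in
theorem coe_clean (f : MvPolynomial (X ⊕ X) ℕ) :
    ((clean f : MvPolynomial (X ⊕ X) ℕ) : DualPoly X) = (f : DualPoly X) := by
  classical
  have hS1 : clean f = ∑ m ∈ f.support.filter
      (fun m => ¬ ∃ p : X, m (Sum.inl p) ≠ 0 ∧ m (Sum.inr p) ≠ 0),
      MvPolynomial.monomial m (f.coeff m) := by
    rw [clean]
  conv_rhs => rw [MvPolynomial.as_sum f, ← Finset.sum_filter_add_sum_filter_not f.support
    (fun m => ¬ ∃ p : X, m (Sum.inl p) ≠ 0 ∧ m (Sum.inr p) ≠ 0)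
    (fun m => MvPolynomial.monomial m (f.coeff m))]
  rw [hS1]
  show (dualCon X).mk' _ = (dualCon X).mk' _
  rw [map_add, map_sum, map_sum]
  have hz : ∀ m ∈ f.support.filter
      (fun m => ¬¬ ∃ p : X, m (Sum.inl p) ≠ 0 ∧ m (Sum.inr p) ≠ 0),
      ((dualCon X).mk') (MvPolynomial.monomial m (f.coeff m)) = 0 := by
    intro m hm
    rw [Finset.mem_filter, not_not] at hm
    obtain ⟨p, hp1, hp2⟩ := hm.2
    exact coe_monomial_dirty m (f.coeff m) p hp1 hp2
  rw [Finset.sum_congr rfl hz, Finset.sum_const_zero, add_zero]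

end Aux3
section Aux4

theorem exists_hb_ne_zero {X : Type} (q : DualPoly X) (hq : q ≠ 0) :
    ∃ b : X → Bool, hb b q ≠ 0 := by
  classical
  obtain ⟨f, hf⟩ := Quot.exists_rep q
  have hfc : (f : DualPoly X) = q := hf
  have hclean : ((clean f : MvPolynomial (X ⊕ X) ℕ) : DualPoly X) = q := by
    rw [coe_clean, hfc]
  have hc0 : clean f ≠ 0 := by
    intro h
    apply hq
    rw [← hclean, h]
    exact map_zero ((dualCon X).mk')
  obtain ⟨m, hm⟩ := MvPolynomial.support_nonempty.mpr hc0
  have hmm : (clean f).coeff m ≠ 0 := MvPolynomial.mem_support_iff.mp hm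
  have hcoeff : (clean f).coeff m = if m ∈ f.support.filter
      (fun m => ¬ ∃ p : X, m (Sum.inl p) ≠ 0 ∧ m (Sum.inr p) ≠ 0)
      then f.coeff m else 0 := by
    rw [clean, MvPolynomial.coeff_sum]
    simp only [MvPolynomial.coeff_monomial]
    exact Finset.sum_ite_eq' _ m _
  have hmem : m ∈ f.support.filter
      (fun m => ¬ ∃ p : X, m (Sum.inl p) ≠ 0 ∧ m (Sum.inr p) ≠ 0) := by
    by_contra hc
    rw [hcoeff, if_neg hc] at hmm
    exact hmm rfl
  have hPred : ¬ ∃ p : X, m (Sum.inl p) ≠ 0 ∧ m (Sum.inr p) ≠ 0 :=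
    (Finset.mem_filter.mp hmem).2
  refine ⟨fun p => decide (m (Sum.inl p) ≠ 0), ?_⟩
  set b : X → Bool := fun p => decide (m (Sum.inl p) ≠ 0) with hbdef
  have hq' : hb b q = MvPolynomial.eval (sig b) (clean f) := by
    rw [← hclean, hb_coe]
  rw [hq', MvPolynomial.eval_eq]
  intro h0
  have hterm := Finset.sum_eq_zero_iff.mp h0 m hm
  have hprod : (∏ i ∈ m.support, sig b i ^ m i) = 1 := by
    apply Finset.prod_eq_one
    intro i hi
    have hi' := Finsupp.mem_support_iff.mp hi
    rcases i with p | p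
    · have hbp : b p = true := by rw [hbdef]; simpa using hi'
      simp [sig, hbp]
    · have hl : m (Sum.inl p) = 0 := by
        by_contra hl
        exact hPred ⟨p, hl, hi'⟩
      have hbp : b p = false := by rw [hbdef]; simpa using hl
      simp [sig, hbp]
  rw [hprod, mul_one] at hterm
  exact hmm hterm

variable {𝒱 : Vocab} {A X : Type}

theorem Lit.neg_neg (L : Lit 𝒱 A) : L.neg.neg = L := by
  cases L; simp [Lit.neg]

theorem satLit_neg (𝔄 : Struc 𝒱 A) (L : Lit 𝒱 A) : 𝔄.SatLit L.neg ↔ ¬ 𝔄.SatLit L := by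
  rcases L with ⟨pos, R, a⟩
  cases pos <;> simp [Lit.neg, Struc.SatLit, not_not]

theorem md_of_mc (π : Lit 𝒱 A → DualPoly X) (hπ : ModelCompatible π) (b : X → Bool)
    (L : Lit 𝒱 A) :
    (hb b (π L) = 0 ∧ hb b (π L.neg) ≠ 0) ∨ (hb b (π L) ≠ 0 ∧ hb b (π L.neg) = 0) := by
  have key : ∀ M : Lit 𝒱 A, M.pos = true →
      (hb b (π M) = 0 ∧ hb b (π M.neg) ≠ 0) ∨ (hb b (π M) ≠ 0 ∧ hb b (π M.neg) = 0) := by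
    intro M hM
    rcases hπ.1 M hM with ⟨z, h1, h2⟩ | ⟨h1, h2⟩ | ⟨h1, h2⟩
    · rw [h1, h2, hb_tok, hb_tok]
      cases hbz : b z <;> simp [sig, hbz]
    · rw [h1, h2, map_zero, map_one]
      exact Or.inl ⟨rfl, one_ne_zero⟩
    · rw [h1, h2, map_one, map_zero]
      exact Or.inr ⟨one_ne_zero, rfl⟩
  cases hL : L.pos
  case true => exact key L hL
  case false =>
    have hLn : L.neg.pos = true := by rcases L with ⟨pos, R, a⟩; simp [Lit.neg]; simp_all
    have := key L.neg hLn
    rw [Lit.neg_neg] at this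
    tauto

theorem satlit_iff_of_md (τ : Lit 𝒱 A → ℕ)
    (hmd : ∀ L : Lit 𝒱 A, (τ L = 0 ∧ τ L.neg ≠ 0) ∨ (τ L ≠ 0 ∧ τ L.neg = 0))
    (𝔄 : Struc 𝒱 A) (h1 : ∀ L : Lit 𝒱 A, 𝔄.SatLit L → τ L ≠ 0) :
    ∀ L : Lit 𝒱 A, 𝔄.SatLit L ↔ τ L ≠ 0 := by
  intro L
  refine ⟨h1 L, fun hτ => ?_⟩
  by_contra hns
  have h2 := h1 _ ((satLit_neg 𝔄 L).mpr hns)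
  rcases hmd L with ⟨h, _⟩ | ⟨_, h⟩
  · exact hτ h
  · exact h2 h

end Aux4
/-- for a model-compatible interpretation `π` and a sentence `φ`,
`φ` is `Mod_π`-satisfiable iff `π⟦φ⟧ ≠ 0`. -/
theorem modPi_satisfiable_iff {𝒱 : Vocab} {Vars A X : Type} [DecidableEq Vars]
    [Fintype A] [DecidableEq A] [Nonempty A]
    (π : Lit 𝒱 A → DualPoly X) (hπ : ModelCompatible π)
    (φ : Formula 𝒱 Vars) (hφ : φ.FV = ∅) (ν : Vars → A) :
    (∃ 𝔄 : Struc 𝒱 A, Compatible π 𝔄 ∧ Sat 𝔄 φ ν) ↔ eval π φ ν ≠ 0 := by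
  classical
  constructor
  · rintro ⟨𝔄, hcomp, hsat⟩
    set b : X → Bool :=
      fun z => decide (∃ L : Lit 𝒱 A, π L = tok (Sum.inl z) ∧ 𝔄.SatLit L) with hbdef
    set τ : Lit 𝒱 A → ℕ := fun L => hb b (π L) with hτdef
    have h1 : ∀ L : Lit 𝒱 A, 𝔄.SatLit L → τ L ≠ 0 := by
      intro L hSL
      cases hLp : L.pos
      case true =>
        rcases hπ.1 L hLp with ⟨z, hz1, hz2⟩ | ⟨hz1, hz2⟩ | ⟨hz1, hz2⟩
        · have hbz : b z = true := by
            rw [hbdef]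
            simp only [decide_eq_true_eq]
            exact ⟨L, hz1, hSL⟩
          show hb b (π L) ≠ 0
          rw [hz1, hb_tok]
          simp [sig, hbz]
        · exact absurd hSL ((satLit_neg 𝔄 L).mp (hcomp L.neg hz2))
        · show hb b (π L) ≠ 0
          rw [hz1, map_one]
          exact one_ne_zero
      case false =>
        have hMp : L.neg.pos = true := by
          rcases L with ⟨pos, R, a⟩; simp [Lit.neg]; simp_all
        rcases hπ.1 L.neg hMp with ⟨z, hz1, hz2⟩ | ⟨hz1, hz2⟩ | ⟨hz1, hz2⟩
        · rw [Lit.neg_neg] at hz2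
          have hbz : b z = false := by
            rw [hbdef]
            simp only [decide_eq_false_iff_not]
            rintro ⟨L', hL'1, hL'2⟩
            have hLL' : L.neg = L' := hπ.2 L.neg L' z hz1 hL'1
            rw [← hLL'] at hL'2
            exact (satLit_neg 𝔄 L).mp hL'2 hSL
          show hb b (π L) ≠ 0
          rw [hz2, hb_tok]
          simp [sig, hbz]
        · rw [Lit.neg_neg] at hz2
          show hb b (π L) ≠ 0
          rw [hz2, map_one]
          exact one_ne_zero
        · exact absurd hSL ((satLit_neg 𝔄 L).mp (hcomp L.neg hz1))
    have hτiff := satlit_iff_of_md τ (fun L => md_of_mc π hπ b L) 𝔄 h1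
    have hne := (sat_iff_eval τ 𝔄 hτiff φ.size φ le_rfl ν).mp hsat
    intro h0
    apply hne
    rw [hτdef, ← eval_ringHom (hb b) π φ.size φ le_rfl ν, h0, map_zero]
  · intro h
    obtain ⟨b, hbne⟩ := exists_hb_ne_zero _ h
    set τ : Lit 𝒱 A → ℕ := fun L => hb b (π L) with hτdef
    have hmd := fun L => md_of_mc π hπ b L
    set 𝔄 : Struc 𝒱 A := StrucOf τ with h𝔄
    have h1 : ∀ L : Lit 𝒱 A, 𝔄.SatLit L → τ L ≠ 0 := by
      intro L hSL
      rcases L with ⟨pos, R, a⟩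
      cases pos
      case true =>
        simpa [Struc.SatLit, StrucOf, h𝔄] using hSL
      case false =>
        simp only [Struc.SatLit, h𝔄, StrucOf, Bool.false_eq_true, if_false, not_not] at hSL
        rcases hmd ⟨true, R, a⟩ with ⟨hh1, hh2⟩ | ⟨hh1, hh2⟩
        · exact hh2
        · exact absurd hSL hh1
    have hτiff := satlit_iff_of_md τ hmd 𝔄 h1
    refine ⟨𝔄, ?_, ?_⟩
    · intro L hL1
      apply (hτiff L).mpr
      show hb b (π L) ≠ 0
      rw [hL1, map_one]
      exact one_ne_zero
    · apply (sat_iff_eval τ 𝔄 hτiff φ.size φ le_rfl ν).mpr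
      rw [hτdef, ← eval_ringHom (hb b) π φ.size φ le_rfl ν]
      exact hbne
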